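/- Under the assumptions of the previous statement (C₀-semigroup T, collectively compact separately continuous K, bounded B with uniformly bounded solutions on compact time intervals), for each t₀ > 0 there exists a compact set C₀ ⊆ X such that x(t, x₀) ∈ T(t)x₀ + C₀ for all x₀ ∈ B and all t ∈ [0, t₀]. -/

import Mathlib

open MeasureTheory

/-- The mild solutions deviate from the linear evolution `T(t)x₀` only within a fixed
compact set `C₀`, uniformly over `x₀ ∈ B` and `t ∈ [0, t₀]`. -/
theorem stmt_13 (X : Type*) [NormedAddCommGroup X] [NormedSpace ℂ X] [CompleteSpace X]
    (T : ℝ → X →L[ℂ] X) (hT0 : T 0 = 1)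
    (hTadd : ∀ s t : ℝ, 0 ≤ s → 0 ≤ t → T (s + t) = (T s).comp (T t))
    (hTcont : ∀ x : X, ContinuousOn (fun t => T t x) (Set.Ici 0))
    (K : ℝ → X → X)
    (hKt : ∀ x : X, ContinuousOn (fun s => K s x) (Set.Ici 0))
    (hKx : ∀ s : ℝ, 0 ≤ s → Continuous (K s))
    (hcc : ∀ t₁ > (0:ℝ), ∀ B' : Set X, Bornology.IsBounded B' →
      IsCompact (closure (Set.image2 K (Set.Icc 0 t₁) B')))
    (B : Set X) (hB : Bornology.IsBounded B)
    (x : X → ℝ → X)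
    (hxc : ∀ x₀ ∈ B, ContinuousOn (x x₀) (Set.Ici 0))
    (hmild : ∀ x₀ ∈ B, ∀ t : ℝ, 0 ≤ t →
      x x₀ t = T t x₀ + ∫ s in (0:ℝ)..t, (T (t - s)) (K s (x x₀ s)))
    (hbdd : ∀ t₁ > (0:ℝ),
      Bornology.IsBounded {z : X | ∃ x₀ ∈ B, ∃ t ∈ Set.Icc (0:ℝ) t₁, z = x x₀ t})
    (t₀ : ℝ) (ht₀ : 0 < t₀) :
    ∃ C₀ : Set X, IsCompact C₀ ∧
      ∀ x₀ ∈ B, ∀ t ∈ Set.Icc (0:ℝ) t₀, x x₀ t - (T t) x₀ ∈ C₀ := by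
  classical
  -- the set of solution values
  set B' : Set X := {z : X | ∃ x₀ ∈ B, ∃ t ∈ Set.Icc (0:ℝ) t₀, z = x x₀ t} with hB'def
  have hB' : Bornology.IsBounded B' := hbdd t₀ ht₀
  -- compact set containing the K-values
  set CK : Set X := closure (Set.image2 K (Set.Icc 0 t₀) B') with hCKdef
  have hCK : IsCompact CK := hcc t₀ ht₀ B' hB'
  -- uniform bound on ‖T τ‖ for τ ∈ [0, t₀]
  obtain ⟨M, hM⟩ : ∃ M : ℝ, ∀ i : Set.Icc (0:ℝ) t₀, ‖T i‖ ≤ M := by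
    apply banach_steinhaus (g := fun i : Set.Icc (0:ℝ) t₀ => T i)
    intro y
    obtain ⟨C, hC⟩ := (isCompact_Icc (a := (0:ℝ)) (b := t₀)).exists_bound_of_continuousOn
      ((hTcont y).mono (Set.Icc_subset_Ici_self))
    exact ⟨C, fun i => hC i i.2⟩
  have hM0 : ∀ τ ∈ Set.Icc (0:ℝ) t₀, ∀ y : X, ‖T τ y‖ ≤ M * ‖y‖ := fun τ hτ y =>
    ((T τ).le_of_opNorm_le (hM ⟨τ, hτ⟩) y)
  -- joint continuity of (τ, y) ↦ T τ y on [0,t₀] × CK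
  have hΦ : ContinuousOn (fun p : ℝ × X => T p.1 p.2) (Set.Icc 0 t₀ ×ˢ CK) := by
    rintro ⟨τ₀, y₀⟩ ⟨hτ₀, hy₀⟩
    have h1 : Filter.Tendsto (fun p : ℝ × X => T p.1 (p.2 - y₀))
        (nhdsWithin (τ₀, y₀) (Set.Icc 0 t₀ ×ˢ CK)) (nhds 0) := by
      refine squeeze_zero_norm' (a := fun p : ℝ × X => M * ‖p.2 - y₀‖) ?_ ?_
      · filter_upwards [self_mem_nhdsWithin] with p hp
        exact hM0 p.1 hp.1 _
      · have h3 : Filter.Tendsto (fun p : ℝ × X => M * ‖p.2 - y₀‖)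
            (nhds (τ₀, y₀)) (nhds (M * ‖y₀ - y₀‖)) :=
          (continuous_const.mul ((continuous_snd.sub continuous_const).norm)).tendsto _
        simpa using h3.mono_left nhdsWithin_le_nhds
    have h2 : Filter.Tendsto (fun p : ℝ × X => T p.1 y₀)
        (nhdsWithin (τ₀, y₀) (Set.Icc 0 t₀ ×ˢ CK)) (nhds (T τ₀ y₀)) := by
      have hc := (hTcont y₀ τ₀ (Set.Icc_subset_Ici_self hτ₀))
      refine hc.tendsto.comp ?_
      refine (continuous_fst.continuousWithinAt (x := (τ₀, y₀))).tendsto_nhdsWithin ?_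
      intro p hp
      exact Set.Icc_subset_Ici_self hp.1
    have h4 := h1.add h2
    simp only [zero_add] at h4
    refine h4.congr fun p => ?_
    simp [map_sub]
  -- the compact set of integrand values
  set D : Set X := (fun p : ℝ × X => T p.1 p.2) '' (Set.Icc 0 t₀ ×ˢ CK) with hDdef
  have hD : IsCompact D := (isCompact_Icc.prod hCK).image_of_continuousOn hΦ
  -- closed convex hull of D ∪ {0}
  set J : Set X := closure (convexHull ℝ (D ∪ {0})) with hJdef
  have hJ : IsCompact J := by
    apply TotallyBounded.isCompact_of_isClosed _ isClosed_closure
    exact (totallyBounded_convexHull.2 ((hD.union isCompact_singleton).totallyBounded)).closure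
  have h0J : (0 : X) ∈ J := subset_closure (subset_convexHull ℝ _ (Or.inr rfl))
  -- the final compact set
  refine ⟨(fun p : ℝ × X => p.1 • p.2) '' (Set.Icc 0 t₀ ×ˢ J), ?_, ?_⟩
  · exact (isCompact_Icc.prod hJ).image (continuous_fst.smul continuous_snd)
  rintro x₀ hx₀ t ⟨ht0, htt₀⟩
  have hdev : x x₀ t - T t x₀ = ∫ s in (0:ℝ)..t, (T (t - s)) (K s (x x₀ s)) := by
    rw [hmild x₀ hx₀ t ht0]; abel
  set f : ℝ → X := fun s => (T (t - s)) (K s (x x₀ s)) with hfdef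
  rcases eq_or_lt_of_le ht0 with h | h
  · -- t = 0 : deviation is 0
    refine ⟨(0, 0), ⟨⟨le_refl _, le_of_lt ht₀⟩, h0J⟩, ?_⟩
    simp only [zero_smul]
    rw [hdev, ← h, intervalIntegral.integral_same]
  by_cases hint : IntervalIntegrable f volume 0 t
  · -- integrable case: use the average
    have hIoc : IntegrableOn f (Set.Ioc 0 t) volume :=
      (intervalIntegrable_iff_integrableOn_Ioc_of_le ht0).1 hint
    have hmem : ∀ᵐ s ∂(volume.restrict (Set.Ioc 0 t)), f s ∈ D ∪ {0} := by
      filter_upwards [ae_restrict_mem measurableSet_Ioc] with s hs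
      left
      refine ⟨(t - s, K s (x x₀ s)), ⟨⟨?_, ?_⟩, ?_⟩, rfl⟩
      · show (0:ℝ) ≤ t - s
        linarith [hs.2]
      · show t - s ≤ t₀
        linarith [hs.1, htt₀]
      · exact subset_closure ⟨s, ⟨le_of_lt hs.1, le_trans hs.2 htt₀⟩, x x₀ s,
          ⟨x₀, hx₀, s, ⟨le_of_lt hs.1, le_trans hs.2 htt₀⟩, rfl⟩, rfl⟩
    have hμ0 : volume (Set.Ioc (0:ℝ) t) ≠ 0 := by
      simp [Real.volume_Ioc, h, ne_of_gt]
    have hμtop : volume (Set.Ioc (0:ℝ) t) ≠ ⊤ := by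
      simp [Real.volume_Ioc]
    have havg : (⨍ s in Set.Ioc 0 t, f s) ∈ J :=
      (convex_convexHull ℝ (D ∪ {0})).set_average_mem_closure hμ0 hμtop
        (hmem.mono fun s hs => subset_convexHull ℝ _ hs) hIoc
    refine ⟨(t, ⨍ s in Set.Ioc 0 t, f s), ⟨⟨ht0, htt₀⟩, havg⟩, ?_⟩
    have : (volume (Set.Ioc (0:ℝ) t)).toReal • (⨍ s in Set.Ioc 0 t, f s)
        = ∫ s in Set.Ioc 0 t, f s := measure_smul_setAverage f hμtop
    rw [hdev, intervalIntegral.integral_of_le ht0, ← this]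
    simp [Real.volume_Ioc, ht0]
  · -- non-integrable case: interval integral is 0
    refine ⟨(0, 0), ⟨⟨le_refl _, le_of_lt ht₀⟩, h0J⟩, ?_⟩
    simp only [zero_smul]
    rw [hdev, intervalIntegral.integral_undef hint]
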